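/- Let the hypotheses of the adaptive CWT expansion hold: x(t) = Σ_{k=1}^K A_k(t)e^{i2πφ_k(t)} with |A'_k| ≤ ε₁, |φ''_k| ≤ ε₂, g ∈ 𝒮, and let Z_k = {(a,b) : |μ − aφ'_k(b)| < α/σ(b)} with |ĝ(ξ)| ≤ τ₀ for |ξ| ≥ α. Suppose ε̃₁ ≥ a₂(b)σ(b)Λ₁(b) + τ₀ Σ_{k=1}^K A_k(b), where Λ₁(b) = Kε₁I₁ + πε₂I₂ (μσ(b)+α)/φ'₁(b) Σ_j A_j(b), the zones Z_k are pairwise disjoint, and a ∈ [a₁(b), a₂(b)] = [(μ−α/σ(b))/φ'_K(b), (μ+α/σ(b))/φ'₁(b)]. If |W̃_x(a,b)| > ε̃₁ then there exists a unique k ∈ {1,…,K} with (a,b) ∈ Z_k. -/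

import Mathlib

open Real MeasureTheory

-- Lipschitz-type bound from global derivative bound
lemma lip_bound {f : ℝ → ℝ} (hf : Differentiable ℝ f) {C : ℝ}
    (hC : ∀ t, |deriv f t| ≤ C) (x y : ℝ) : |f y - f x| ≤ C * |y - x| := by
  have := Convex.norm_image_sub_le_of_norm_deriv_le
    (f := f) (s := Set.univ) (C := C)
    (fun t _ => hf t)
    (fun t _ => by simpa [Real.norm_eq_abs] using hC t)
    convex_univ (Set.mem_univ x) (Set.mem_univ y)
  simpa [Real.norm_eq_abs] using this

-- |exp(xI) - exp(yI)| ≤ |x - y|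
lemma exp_I_lip (x y : ℝ) :
    ‖Complex.exp ((x:ℂ) * Complex.I) - Complex.exp ((y:ℂ) * Complex.I)‖ ≤ |x - y| := by
  have hdiff : Differentiable ℝ (fun t : ℝ => Complex.exp ((t:ℂ) * Complex.I)) := by
    intro t
    exact ((Complex.ofRealCLM.differentiable t).mul_const Complex.I).cexp
  have hderiv : ∀ t : ℝ, HasDerivAt (fun t : ℝ => Complex.exp ((t:ℂ) * Complex.I))
      (Complex.exp ((t:ℂ) * Complex.I) * Complex.I) t := by
    intro t
    have h1 : HasDerivAt (fun t : ℝ => ((t:ℂ) * Complex.I)) Complex.I t := by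
      simpa using (Complex.ofRealCLM.hasDerivAt (x := t)).mul_const Complex.I
    simpa using h1.cexp
  have := Convex.norm_image_sub_le_of_norm_deriv_le
    (f := fun t : ℝ => Complex.exp ((t:ℂ) * Complex.I)) (s := Set.univ) (C := 1)
    (fun t _ => hdiff t)
    (fun t _ => by
      rw [(hderiv t).deriv]
      simp [Complex.norm_exp])
    convex_univ (Set.mem_univ y) (Set.mem_univ x)
  simpa [Real.norm_eq_abs] using this

lemma quad_bound {f : ℝ → ℝ} (hf : ContDiff ℝ 2 f) {ε : ℝ}
    (hε : ∀ t, |deriv (deriv f) t| ≤ ε) (b y : ℝ) :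
    |f y - f b - (y - b) * deriv f b| ≤ ε * (y - b) ^ 2 / 2 := by
  have hdf : Differentiable ℝ f := hf.differentiable (by norm_num)
  have hf1 : ContDiff ℝ 1 (deriv f) := by
    have := (contDiff_succ_iff_deriv (n := 1)).mp (by exact_mod_cast hf)
    exact this.2.2
  have hdf' : Differentiable ℝ (deriv f) := hf1.differentiable one_ne_zero
  set c := deriv f b with hc
  set e : ℝ → ℝ := fun u => f u - f b - (u - b) * c with he
  have he' : ∀ u, HasDerivAt e (deriv f u - c) u := by
    intro u
    have h1 : HasDerivAt f (deriv f u) u := (hdf u).hasDerivAt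
    have h2 : HasDerivAt (fun u : ℝ => (u - b) * c) c u := by
      simpa using ((hasDerivAt_id u).sub_const b).mul_const c
    exact (h1.sub_const (f b)).sub h2
  have hbound : ∀ u, |deriv f u - c| ≤ ε * |u - b| := by
    intro u
    simpa using lip_bound hdf' hε b u
  have hcont : Continuous (fun u => deriv f u - c) := (hf1.continuous).sub continuous_const
  have heb : e b = 0 := by simp [he]
  have hkey : ∀ p q : ℝ, e q - e p = ∫ u in p..q, (deriv f u - c) := by
    intro p q
    exact (intervalIntegral.integral_eq_sub_of_hasDerivAt (fun u _ => he' u)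
      (hcont.intervalIntegrable p q)).symm
  have hquad : ∀ p q : ℝ, p ≤ q → (∫ u in p..q, ε * (u - p)) = ε * (q - p) ^ 2 / 2 := by
    intro p q _
    have h1 : (fun u : ℝ => ε * (u - p)) = fun u : ℝ => ε * u - ε * p := by funext u; ring
    rw [h1, intervalIntegral.integral_sub ((intervalIntegral.intervalIntegrable_id).const_mul ε)
      (intervalIntegrable_const)]
    rw [intervalIntegral.integral_const_mul, integral_id,
      intervalIntegral.integral_const]
    simp only [smul_eq_mul]
    ring
  rcases le_total b y with hby | hby
  · have h1 : e y = ∫ u in b..y, (deriv f u - c) := by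
      have := hkey b y; rw [heb] at this; linarith [this]
    have h2 : |e y| ≤ ∫ u in b..y, |deriv f u - c| := by
      rw [h1]
      simpa [Real.norm_eq_abs] using
        intervalIntegral.norm_integral_le_integral_norm (f := fun u => deriv f u - c)
          (μ := volume) (a := b) (b := y) hby
    have h3 : (∫ u in b..y, |deriv f u - c|) ≤ ∫ u in b..y, ε * (u - b) := by
      apply intervalIntegral.integral_mono_on hby
      · exact (hcont.abs).intervalIntegrable b y
      · exact ((continuous_const.mul (continuous_id.sub continuous_const))).intervalIntegrable b y
      · intro u hu
        have := hbound u
        rw [abs_of_nonneg (by linarith [hu.1] : (0:ℝ) ≤ u - b)] at this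
        exact this
    have h4 := hquad b y hby
    calc |f y - f b - (y - b) * deriv f b| = |e y| := by rw [he]
      _ ≤ ∫ u in b..y, ε * (u - b) := le_trans h2 h3
      _ = ε * (y - b) ^ 2 / 2 := h4
  · have h1 : e y = -∫ u in y..b, (deriv f u - c) := by
      have := hkey y b; rw [heb] at this
      rw [← this]; ring
    have h2 : |e y| ≤ ∫ u in y..b, |deriv f u - c| := by
      rw [h1, abs_neg]
      simpa [Real.norm_eq_abs] using
        intervalIntegral.norm_integral_le_integral_norm (f := fun u => deriv f u - c)
          (μ := volume) (a := y) (b := b) hby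
    have h3 : (∫ u in y..b, |deriv f u - c|) ≤ ∫ u in y..b, ε * (b - u) := by
      apply intervalIntegral.integral_mono_on hby
      · exact (hcont.abs).intervalIntegrable y b
      · exact ((continuous_const.mul (continuous_const.sub continuous_id))).intervalIntegrable y b
      · intro u hu
        have h5 := hbound u
        rw [abs_of_nonpos (by linarith [hu.2] : u - b ≤ 0)] at h5
        calc |deriv f u - c| ≤ ε * -(u - b) := h5
          _ = ε * (b - u) := by ring
    have h4 : (∫ u in y..b, ε * (b - u)) = ε * (y - b) ^ 2 / 2 := by
      have h1' : (fun u : ℝ => ε * (b - u)) = fun u : ℝ => ε * b - ε * u := by funext u; ring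
      rw [h1', intervalIntegral.integral_sub (intervalIntegrable_const)
        ((intervalIntegral.intervalIntegrable_id).const_mul ε)]
      rw [intervalIntegral.integral_const_mul, intervalIntegral.integral_const_mul,
        integral_id, intervalIntegral.integral_const]
      simp only [smul_eq_mul]
      ring
    calc |f y - f b - (y - b) * deriv f b| = |e y| := by rw [he]
      _ ≤ ∫ u in y..b, ε * (b - u) := le_trans h2 h3
      _ = ε * (y - b) ^ 2 / 2 := h4

lemma abs_exp_re_zero {z : ℂ} (h : z.re = 0) : ‖Complex.exp z‖ = 1 := by
  rw [Complex.norm_exp, h, Real.exp_zero]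

set_option maxHeartbeats 2000000 in

theorem stmt_12 (K : ℕ) (hK : 0 < K)
    (A : Fin K → ℝ → ℝ) (φ : Fin K → ℝ → ℝ)
    (g : SchwartzMap ℝ ℂ) (σ α τ₀ μ ε₁ ε₂ εtilde₁ : ℝ) (b : ℝ)
    (hσ : 0 < σ) (hα : 0 < α) (hμ : 0 < μ) (hτ₀ : 0 < τ₀)
    (hA : ∀ k, ContDiff ℝ 1 (A k)) (hAbdd : ∀ k, ∃ C, ∀ t, |A k t| ≤ C)
    (hApos : ∀ k t, 0 < A k t)
    (hφ : ∀ k, ContDiff ℝ 2 (φ k))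
    (hφ'pos : ∀ k t, 0 < deriv (φ k) t)
    (hmono : ∀ k l : Fin K, k < l → ∀ t, deriv (φ k) t < deriv (φ l) t)
    (hA' : ∀ k t, |deriv (A k) t| ≤ ε₁)
    (hφ'' : ∀ k t, |deriv (deriv (φ k)) t| ≤ ε₂)
    -- `|ĝ(ξ)| ≤ τ₀` for `|ξ| ≥ α`
    (hghat : ∀ ξ : ℝ, α ≤ |ξ| →
      ‖∫ t : ℝ, g t *
        Complex.exp (-(2 * (π : ℂ) * (ξ : ℂ) * (t : ℂ)) * Complex.I)‖ ≤ τ₀)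
    -- the scale-time zones (at time `b`)
    (Z : Fin K → Set ℝ)
    (hZ : ∀ k, Z k = {a : ℝ | |μ - a * deriv (φ k) b| < α / σ})
    (hdisj : Pairwise (Function.onFun Disjoint Z))
    -- the threshold condition `εtilde₁ ≥ a₂(b)σ(b)Λ₁(b) + τ₀ Σ_k A_k(b)`
    (hthr : εtilde₁ ≥ ((μ + α / σ) / deriv (φ ⟨0, hK⟩) b) * σ *
        (K * ε₁ * (∫ t : ℝ, |t| ^ 1 * ‖g t‖)
          + π * ε₂ * (∫ t : ℝ, |t| ^ 2 * ‖g t‖) *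
            ((μ * σ + α) / deriv (φ ⟨0, hK⟩) b) * (∑ j, A j b))
        + τ₀ * (∑ k, A k b))
    (a : ℝ)
    (ha : (μ - α / σ) / deriv (φ ⟨K - 1, by omega⟩) b ≤ a
        ∧ a ≤ (μ + α / σ) / deriv (φ ⟨0, hK⟩) b)
    -- the adaptive CWT exceeds the threshold
    (hW : ‖∫ t : ℝ, (∑ k, ((A k (b + a * t) : ℝ) : ℂ) *
          Complex.exp (Complex.I * (2 * (π : ℂ) * ((φ k (b + a * t) : ℝ) : ℂ)))) *
        ((σ : ℂ))⁻¹ * g (t / σ) *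
        Complex.exp (-(2 * (π : ℂ) * (μ : ℂ) * (t : ℂ)) * Complex.I)‖ > εtilde₁) :
    ∃! k : Fin K, a ∈ Z k := by
  classical
  have hσ' : σ ≠ 0 := ne_of_gt hσ
  have hex : ∃ k : Fin K, a ∈ Z k := by
    by_contra hno
    push_neg at hno
    have hfar : ∀ k : Fin K, α / σ ≤ |μ - a * deriv (φ k) b| := by
      intro k
      have := hno k
      rw [hZ k] at this
      simpa [Set.mem_setOf_eq, not_lt] using this
    -- notation
    set d0 := deriv (φ ⟨0, hK⟩) b with hd0
    have hd0pos : 0 < d0 := hφ'pos _ b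
    set a₂ := (μ + α / σ) / d0 with ha₂def
    set I₁ := ∫ t : ℝ, |t| ^ 1 * ‖g t‖ with hI₁def
    set I₂ := ∫ t : ℝ, |t| ^ 2 * ‖g t‖ with hI₂def
    set SA := ∑ j, A j b with hSAdef
    have hε₁0 : 0 ≤ ε₁ := le_trans (abs_nonneg _) (hA' ⟨0, hK⟩ 0)
    have hε₂0 : 0 ≤ ε₂ := le_trans (abs_nonneg _) (hφ'' ⟨0, hK⟩ 0)
    have hI₁0 : 0 ≤ I₁ := integral_nonneg fun t => by positivity
    have hI₂0 : 0 ≤ I₂ := integral_nonneg fun t => by positivity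
    have hSA0 : 0 ≤ SA := Finset.sum_nonneg fun j _ => (hApos j b).le
    have ha₂pos : 0 < a₂ := div_pos (by positivity) hd0pos
    -- |a| ≤ a₂
    have haa₂ : |a| ≤ a₂ := by
      obtain ⟨ha1, ha2⟩ := ha
      have hdKpos : 0 < deriv (φ ⟨K - 1, by omega⟩) b := hφ'pos _ b
      have hd0dK : d0 ≤ deriv (φ ⟨K - 1, by omega⟩) b := by
        rcases Nat.eq_zero_or_pos (K - 1) with h | h
        · have : (⟨0, hK⟩ : Fin K) = ⟨K - 1, by omega⟩ := by
            apply Fin.ext; simp [h]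
          rw [hd0, this]
        · exact le_of_lt (hmono ⟨0, hK⟩ ⟨K - 1, by omega⟩ (by simp [Fin.lt_def, h]) b)
      rw [abs_le]
      refine ⟨?_, ha2⟩
      have h1 : -a₂ ≤ (μ - α / σ) / deriv (φ ⟨K - 1, by omega⟩) b := by
        rcases le_or_gt 0 (μ - α / σ) with h | h
        · have h2 : 0 ≤ (μ - α / σ) / deriv (φ ⟨K - 1, by omega⟩) b := div_nonneg h hdKpos.le
          have h3 : 0 < a₂ := ha₂pos
          linarith
        · have h2 : (μ - α / σ) / d0 ≤ (μ - α / σ) / deriv (φ ⟨K - 1, by omega⟩) b := by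
            rw [div_le_div_iff₀ hd0pos hdKpos]
            nlinarith
          have h3 : -a₂ ≤ (μ - α / σ) / d0 := by
            rw [ha₂def, ← neg_div, div_le_div_iff₀ hd0pos hd0pos]
            have hασ : 0 < α / σ := div_pos hα hσ
            nlinarith
          linarith
      linarith
    -- the summand functions
    set F : Fin K → ℝ → ℂ := fun k t =>
      ((A k (b + a * t) : ℝ) : ℂ) *
        Complex.exp (Complex.I * (2 * (π : ℂ) * ((φ k (b + a * t) : ℝ) : ℂ))) *
        ((σ : ℂ))⁻¹ * g (t / σ) *
        Complex.exp (-(2 * (π : ℂ) * (μ : ℂ) * (t : ℂ)) * Complex.I) with hFdef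
    set M : Fin K → ℝ → ℂ := fun k t =>
      ((A k b : ℝ) : ℂ) *
        Complex.exp (Complex.I * (2 * (π : ℂ) * ((φ k b + a * t * deriv (φ k) b : ℝ) : ℂ))) *
        ((σ : ℂ))⁻¹ * g (t / σ) *
        Complex.exp (-(2 * (π : ℂ) * (μ : ℂ) * (t : ℂ)) * Complex.I) with hMdef
    -- rewrite hW
    have hW' : ‖∫ t : ℝ, ∑ k, F k t‖ > εtilde₁ := by
      have : ∀ t : ℝ, (∑ k, ((A k (b + a * t) : ℝ) : ℂ) *
          Complex.exp (Complex.I * (2 * (π : ℂ) * ((φ k (b + a * t) : ℝ) : ℂ)))) *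
          ((σ : ℂ))⁻¹ * g (t / σ) *
          Complex.exp (-(2 * (π : ℂ) * (μ : ℂ) * (t : ℂ)) * Complex.I) = ∑ k, F k t := by
        intro t
        simp only [hFdef, Finset.sum_mul]
      simpa only [this] using hW
    -- integrability infrastructure
    have hgint : Integrable (fun t : ℝ => (g (t / σ) : ℂ)) := g.integrable.comp_div hσ'
    have hgnorm : Integrable (fun t : ℝ => ‖g (t / σ)‖) := by
      simpa using hgint.norm
    have hHn : ∀ n : ℕ, Integrable (fun s : ℝ => |s| ^ n * ‖g s‖) := by
      intro n
      simpa [Real.norm_eq_abs] using g.integrable_pow_mul volume n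
    have hJint : ∀ n : ℕ, Integrable (fun t : ℝ => |t| ^ n * ‖g (t / σ)‖) := by
      intro n
      have h1 := ((hHn n).comp_div hσ').const_mul (σ ^ n)
      have h2 : (fun t : ℝ => σ ^ n * (|t / σ| ^ n * ‖g (t / σ)‖))
          = fun t : ℝ => |t| ^ n * ‖g (t / σ)‖ := by
        funext t
        rw [abs_div, abs_of_pos hσ, div_pow]
        field_simp
      rwa [h2] at h1
    have hJval : ∀ n : ℕ, (∫ t : ℝ, |t| ^ n * ‖g (t / σ)‖)
        = σ ^ (n + 1) * ∫ s : ℝ, |s| ^ n * ‖g s‖ := by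
      intro n
      have h2 : (fun t : ℝ => |t| ^ n * ‖g (t / σ)‖)
          = fun t : ℝ => σ ^ n * ((fun s : ℝ => |s| ^ n * ‖g s‖) (t / σ)) := by
        funext t
        simp only
        rw [abs_div, abs_of_pos hσ, div_pow]
        field_simp
      rw [h2, integral_const_mul, Measure.integral_comp_div
        (fun s : ℝ => |s| ^ n * ‖g s‖) σ, abs_of_pos hσ, smul_eq_mul]
      ring
    -- continuity
    have haff : Continuous fun t : ℝ => b + a * t :=
      continuous_const.add (continuous_const.mul continuous_id)
    have hcontF : ∀ k, Continuous (F k) := by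
      intro k
      have h1 : Continuous fun t : ℝ => ((A k (b + a * t) : ℝ) : ℂ) :=
        Complex.continuous_ofReal.comp ((hA k).continuous.comp haff)
      have h2 : Continuous fun t : ℝ =>
          Complex.exp (Complex.I * (2 * (π : ℂ) * ((φ k (b + a * t) : ℝ) : ℂ))) :=
        Complex.continuous_exp.comp (continuous_const.mul (continuous_const.mul
          (Complex.continuous_ofReal.comp ((hφ k).continuous.comp haff))))
      have h3 : Continuous fun t : ℝ => (g (t / σ) : ℂ) :=
        g.continuous.comp (continuous_id.div_const σ)
      have h4 : Continuous fun t : ℝ =>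
          Complex.exp (-(2 * (π : ℂ) * (μ : ℂ) * (t : ℂ)) * Complex.I) :=
        Complex.continuous_exp.comp
          (((continuous_const.mul Complex.continuous_ofReal).neg).mul continuous_const)
      exact (((h1.mul h2).mul continuous_const).mul h3).mul h4
    have hcontM : ∀ k, Continuous (M k) := by
      intro k
      have h1 : Continuous fun _ : ℝ => ((A k b : ℝ) : ℂ) := continuous_const
      have hph : Continuous fun t : ℝ => (φ k b + a * t * deriv (φ k) b : ℝ) :=
        continuous_const.add ((continuous_const.mul continuous_id).mul continuous_const)
      have h2 : Continuous fun t : ℝ =>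
          Complex.exp (Complex.I * (2 * (π : ℂ) * ((φ k b + a * t * deriv (φ k) b : ℝ) : ℂ))) :=
        Complex.continuous_exp.comp (continuous_const.mul (continuous_const.mul
          (Complex.continuous_ofReal.comp hph)))
      have h3 : Continuous fun t : ℝ => (g (t / σ) : ℂ) :=
        g.continuous.comp (continuous_id.div_const σ)
      have h4 : Continuous fun t : ℝ =>
          Complex.exp (-(2 * (π : ℂ) * (μ : ℂ) * (t : ℂ)) * Complex.I) :=
        Complex.continuous_exp.comp
          (((continuous_const.mul Complex.continuous_ofReal).neg).mul continuous_const)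
      exact (((h1.mul h2).mul continuous_const).mul h3).mul h4
    -- integrability of F and M
    have hFnorm : ∀ k t, ‖F k t‖ = |A k (b + a * t)| * σ⁻¹ * ‖g (t / σ)‖ := by
      intro k t
      simp only [hFdef, norm_mul, Complex.norm_real, Real.norm_eq_abs, norm_inv]
      rw [abs_exp_re_zero (by simp [Complex.mul_re]), abs_exp_re_zero (by simp [Complex.mul_re]),
        abs_of_pos hσ]
      ring
    have hMnorm : ∀ k t, ‖M k t‖ = |A k b| * σ⁻¹ * ‖g (t / σ)‖ := by
      intro k t
      simp only [hMdef, norm_mul, Complex.norm_real, Real.norm_eq_abs, norm_inv]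
      rw [abs_exp_re_zero (by simp [Complex.mul_re]), abs_exp_re_zero (by simp [Complex.mul_re]),
        abs_of_pos hσ]
      ring
    have hFint : ∀ k, Integrable (F k) := by
      intro k
      obtain ⟨C, hC⟩ := hAbdd k
      refine Integrable.mono' (hgnorm.const_mul (C * σ⁻¹)) (hcontF k).aestronglyMeasurable ?_
      filter_upwards with t
      rw [hFnorm k t]
      have h1 := hC (b + a * t)
      have h2 : (0:ℝ) ≤ ‖g (t / σ)‖ := norm_nonneg _
      have h3 : (0:ℝ) ≤ σ⁻¹ := by positivity
      calc |A k (b + a * t)| * σ⁻¹ * ‖g (t / σ)‖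
          ≤ C * σ⁻¹ * ‖g (t / σ)‖ := by
            apply mul_le_mul_of_nonneg_right _ h2
            exact mul_le_mul_of_nonneg_right h1 h3
        _ = C * σ⁻¹ * ‖g (t / σ)‖ := rfl
    have hMint : ∀ k, Integrable (M k) := by
      intro k
      refine Integrable.mono' (hgnorm.const_mul (|A k b| * σ⁻¹)) (hcontM k).aestronglyMeasurable ?_
      filter_upwards with t
      rw [hMnorm k t]
    -- remainder bound
    set D : Fin K → ℝ → ℝ := fun k t =>
      (ε₁ * |a| * σ⁻¹) * (|t| ^ 1 * ‖g (t / σ)‖)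
        + (A k b * (π * ε₂ * a ^ 2) * σ⁻¹) * (|t| ^ 2 * ‖g (t / σ)‖) with hDdef
    have hDint : ∀ k, Integrable (D k) := fun k =>
      ((hJint 1).const_mul _).add ((hJint 2).const_mul _)
    have hDval : ∀ k, (∫ t : ℝ, D k t)
        = ε₁ * |a| * σ * I₁ + A k b * (π * ε₂ * a ^ 2) * σ ^ 2 * I₂ := by
      intro k
      simp only [hDdef]
      rw [integral_add ((hJint 1).const_mul _) ((hJint 2).const_mul _),
        integral_const_mul, integral_const_mul, hJval 1, hJval 2, ← hI₁def, ← hI₂def]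
      field_simp
      ring
    have hptw : ∀ k t, ‖F k t - M k t‖ ≤ D k t := by
      intro k t
      set y := b + a * t with hy
      have hyb : y - b = a * t := by rw [hy]; ring
      have hfac : F k t - M k t =
          (((A k y : ℝ) : ℂ) * Complex.exp (Complex.I * (2 * (π : ℂ) * ((φ k y : ℝ) : ℂ)))
            - ((A k b : ℝ) : ℂ) * Complex.exp (Complex.I *
                (2 * (π : ℂ) * ((φ k b + a * t * deriv (φ k) b : ℝ) : ℂ))))
          * (((σ : ℂ))⁻¹ * g (t / σ) *
              Complex.exp (-(2 * (π : ℂ) * (μ : ℂ) * (t : ℂ)) * Complex.I)) := by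
        simp only [hFdef, hMdef]; ring
      rw [hfac, norm_mul]
      have hR : ‖((σ : ℂ))⁻¹ * g (t / σ) *
          Complex.exp (-(2 * (π : ℂ) * (μ : ℂ) * (t : ℂ)) * Complex.I)‖
          = σ⁻¹ * ‖g (t / σ)‖ := by
        simp only [norm_mul, norm_inv, Complex.norm_real, Real.norm_eq_abs]
        rw [abs_exp_re_zero (by simp [Complex.mul_re]), abs_of_pos hσ]
        ring
      rw [hR]
      have hA1 : |A k y - A k b| ≤ ε₁ * |a * t| := by
        have h1 := lip_bound ((hA k).differentiable one_ne_zero) (hA' k) b y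
        rwa [hyb] at h1
      have hphi : |2 * π * (φ k y) - 2 * π * (φ k b + a * t * deriv (φ k) b)|
          ≤ π * ε₂ * (a * t) ^ 2 := by
        have h2 := quad_bound (hφ k) (hφ'' k) b y
        rw [hyb] at h2
        have h3 : 2 * π * (φ k y) - 2 * π * (φ k b + a * t * deriv (φ k) b)
            = 2 * π * (φ k y - φ k b - a * t * deriv (φ k) b) := by ring
        rw [h3, abs_mul, abs_of_pos (by positivity : (0:ℝ) < 2 * π)]
        have h4 : |φ k y - φ k b - a * t * deriv (φ k) b| ≤ ε₂ * (a * t) ^ 2 / 2 := h2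
        calc 2 * π * |φ k y - φ k b - a * t * deriv (φ k) b|
            ≤ 2 * π * (ε₂ * (a * t) ^ 2 / 2) :=
              mul_le_mul_of_nonneg_left h4 (by positivity)
          _ = π * ε₂ * (a * t) ^ 2 := by ring
      have hexp : ‖Complex.exp (Complex.I * (2 * (π : ℂ) * ((φ k y : ℝ) : ℂ)))
          - Complex.exp (Complex.I *
            (2 * (π : ℂ) * ((φ k b + a * t * deriv (φ k) b : ℝ) : ℂ)))‖
          ≤ π * ε₂ * (a * t) ^ 2 := by
        have h3 := exp_I_lip (2 * π * (φ k y)) (2 * π * (φ k b + a * t * deriv (φ k) b))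
        have e1 : ((2 * π * (φ k y) : ℝ) : ℂ) * Complex.I
            = Complex.I * (2 * (π : ℂ) * ((φ k y : ℝ) : ℂ)) := by push_cast; ring
        have e2 : ((2 * π * (φ k b + a * t * deriv (φ k) b) : ℝ) : ℂ) * Complex.I
            = Complex.I * (2 * (π : ℂ) * ((φ k b + a * t * deriv (φ k) b : ℝ) : ℂ)) := by
          push_cast; ring
        rw [e1, e2] at h3
        exact le_trans h3 hphi
      have hsplitXY : ((A k y : ℝ) : ℂ) * Complex.exp (Complex.I *
            (2 * (π : ℂ) * ((φ k y : ℝ) : ℂ)))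
          - ((A k b : ℝ) : ℂ) * Complex.exp (Complex.I *
            (2 * (π : ℂ) * ((φ k b + a * t * deriv (φ k) b : ℝ) : ℂ)))
          = ((A k y - A k b : ℝ) : ℂ) * Complex.exp (Complex.I *
            (2 * (π : ℂ) * ((φ k y : ℝ) : ℂ)))
          + ((A k b : ℝ) : ℂ) * (Complex.exp (Complex.I *
            (2 * (π : ℂ) * ((φ k y : ℝ) : ℂ)))
            - Complex.exp (Complex.I *
            (2 * (π : ℂ) * ((φ k b + a * t * deriv (φ k) b : ℝ) : ℂ)))) := by
        push_cast; ring
      rw [hsplitXY]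
      have hXY : ‖((A k y - A k b : ℝ) : ℂ) * Complex.exp (Complex.I *
            (2 * (π : ℂ) * ((φ k y : ℝ) : ℂ)))
          + ((A k b : ℝ) : ℂ) * (Complex.exp (Complex.I *
            (2 * (π : ℂ) * ((φ k y : ℝ) : ℂ)))
            - Complex.exp (Complex.I *
            (2 * (π : ℂ) * ((φ k b + a * t * deriv (φ k) b : ℝ) : ℂ))))‖
          ≤ ε₁ * |a * t| + A k b * (π * ε₂ * (a * t) ^ 2) := by
        refine le_trans (norm_add_le _ _) ?_
        have n1 : ‖((A k y - A k b : ℝ) : ℂ) * Complex.exp (Complex.I *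
            (2 * (π : ℂ) * ((φ k y : ℝ) : ℂ)))‖ = |A k y - A k b| := by
          rw [norm_mul]
          simp only [Complex.norm_real, Real.norm_eq_abs]
          rw [abs_exp_re_zero (by simp [Complex.mul_re]), mul_one]
        have n2 : ‖((A k b : ℝ) : ℂ) * (Complex.exp (Complex.I *
            (2 * (π : ℂ) * ((φ k y : ℝ) : ℂ)))
            - Complex.exp (Complex.I *
            (2 * (π : ℂ) * ((φ k b + a * t * deriv (φ k) b : ℝ) : ℂ))))‖
            = A k b * ‖Complex.exp (Complex.I * (2 * (π : ℂ) * ((φ k y : ℝ) : ℂ)))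
            - Complex.exp (Complex.I *
            (2 * (π : ℂ) * ((φ k b + a * t * deriv (φ k) b : ℝ) : ℂ)))‖ := by
          rw [norm_mul]
          simp only [Complex.norm_real, Real.norm_eq_abs, abs_of_pos (hApos k b)]
        rw [n1, n2]
        have := mul_le_mul_of_nonneg_left hexp (hApos k b).le
        linarith [hA1]
      calc _ ≤ (ε₁ * |a * t| + A k b * (π * ε₂ * (a * t) ^ 2))
            * (σ⁻¹ * ‖g (t / σ)‖) :=
          mul_le_mul_of_nonneg_right hXY (by positivity)
        _ = D k t := by
          simp only [hDdef, pow_one, abs_mul, mul_pow, sq_abs]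
          ring
    have hrem : ∀ k, ‖(∫ t : ℝ, F k t) - ∫ t : ℝ, M k t‖
        ≤ ε₁ * |a| * σ * I₁ + A k b * (π * ε₂ * a ^ 2) * σ ^ 2 * I₂ := by
      intro k
      rw [← integral_sub (hFint k) (hMint k)]
      calc ‖∫ t : ℝ, (F k t - M k t)‖
          = ‖∫ t : ℝ, (F k t - M k t)‖ := rfl
        _ ≤ ∫ t : ℝ, ‖F k t - M k t‖ := norm_integral_le_integral_norm _
        _ ≤ ∫ t : ℝ, D k t :=
            integral_mono ((hFint k).sub (hMint k)).norm (hDint k) fun t => hptw k t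
        _ = _ := hDval k
    -- main term bound
    have hmain : ∀ k, ‖∫ t : ℝ, M k t‖ ≤ τ₀ * A k b := by
      intro k
      set ξ := μ - a * deriv (φ k) b with hξ
      have hξα : α ≤ |σ * ξ| := by
        rw [abs_mul, abs_of_pos hσ]
        calc α = σ * (α / σ) := by field_simp
          _ ≤ σ * |ξ| := mul_le_mul_of_nonneg_left (hfar k) hσ.le
      have hGbound := hghat (σ * ξ) hξα
      set G : ℝ → ℂ := fun s => (g s : ℂ) *
        Complex.exp (-(2 * (π : ℂ) * ((σ * ξ : ℝ) : ℂ) * (s : ℂ)) * Complex.I) with hGdef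
      set Cst : ℂ := ((A k b : ℝ) : ℂ) *
        Complex.exp (Complex.I * (2 * (π : ℂ) * ((φ k b : ℝ) : ℂ))) with hCdef
      have hσC : ((σ : ℝ) : ℂ) ≠ 0 := Complex.ofReal_ne_zero.mpr hσ'
      have hMeq : ∀ t : ℝ, M k t = Cst * (((σ : ℂ))⁻¹ * G (t / σ)) := by
        intro t
        simp only [hMdef, hCdef, hGdef]
        calc ((A k b : ℝ) : ℂ) *
            Complex.exp (Complex.I * (2 * (π : ℂ) * ((φ k b + a * t * deriv (φ k) b : ℝ) : ℂ))) *
            ((σ : ℂ))⁻¹ * g (t / σ) *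
            Complex.exp (-(2 * (π : ℂ) * (μ : ℂ) * (t : ℂ)) * Complex.I)
            = ((A k b : ℝ) : ℂ) * ((σ : ℂ))⁻¹ * g (t / σ) *
              (Complex.exp (Complex.I * (2 * (π : ℂ) *
                  ((φ k b + a * t * deriv (φ k) b : ℝ) : ℂ))) *
                Complex.exp (-(2 * (π : ℂ) * (μ : ℂ) * (t : ℂ)) * Complex.I)) := by ring
          _ = ((A k b : ℝ) : ℂ) * ((σ : ℂ))⁻¹ * g (t / σ) *
              Complex.exp (Complex.I * (2 * (π : ℂ) * ((φ k b + a * t * deriv (φ k) b : ℝ) : ℂ))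
                + -(2 * (π : ℂ) * (μ : ℂ) * (t : ℂ)) * Complex.I) := by
            rw [Complex.exp_add]
          _ = ((A k b : ℝ) : ℂ) * ((σ : ℂ))⁻¹ * g (t / σ) *
              Complex.exp (Complex.I * (2 * (π : ℂ) * ((φ k b : ℝ) : ℂ))
                + -(2 * (π : ℂ) * ((σ * ξ : ℝ) : ℂ) * ((t / σ : ℝ) : ℂ)) * Complex.I) := by
            congr 2
            rw [hξ]
            push_cast
            field_simp
            ring
          _ = _ := by
            rw [Complex.exp_add]
            ring
      have key : (∫ t : ℝ, M k t) = Cst * ∫ s : ℝ, G s := by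
        calc (∫ t : ℝ, M k t) = ∫ t : ℝ, Cst * (((σ : ℂ))⁻¹ * G (t / σ)) := by
              simp only [hMeq]
          _ = Cst * ∫ t : ℝ, ((σ : ℂ))⁻¹ * G (t / σ) := integral_const_mul _ _
          _ = Cst * (((σ : ℂ))⁻¹ * ∫ t : ℝ, G (t / σ)) := by rw [integral_const_mul]
          _ = Cst * (((σ : ℂ))⁻¹ * ((|σ| : ℝ) • ∫ s : ℝ, G s)) := by
              rw [Measure.integral_comp_div G σ]
          _ = Cst * ∫ s : ℝ, G s := by
              rw [abs_of_pos hσ, Complex.real_smul]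
              field_simp
      rw [key, norm_mul]
      have hCabs : ‖Cst‖ = A k b := by
        rw [hCdef, norm_mul, Complex.norm_real, Real.norm_eq_abs, abs_of_pos (hApos k b),
          abs_exp_re_zero (by simp [Complex.mul_re]), mul_one]
      rw [hCabs, mul_comm τ₀ (A k b)]
      exact mul_le_mul_of_nonneg_left hGbound (hApos k b).le
    -- assembly
    have hsplit : (∫ t : ℝ, ∑ k, F k t) = ∑ k, ∫ t : ℝ, F k t :=
      integral_finset_sum _ fun k _ => hFint k
    have hbound : ‖∫ t : ℝ, ∑ k, F k t‖
        ≤ τ₀ * SA + K * (ε₁ * |a| * σ * I₁) + π * ε₂ * a ^ 2 * σ ^ 2 * I₂ * SA := by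
      rw [hsplit]
      have step1 : ‖∑ k, ∫ t : ℝ, F k t‖ ≤ ∑ k, ‖∫ t : ℝ, F k t‖ := by
        simpa using norm_sum_le Finset.univ fun k => ∫ t : ℝ, F k t
      have step2 : ∀ k : Fin K, ‖∫ t : ℝ, F k t‖
          ≤ τ₀ * A k b + (ε₁ * |a| * σ * I₁ + A k b * (π * ε₂ * a ^ 2) * σ ^ 2 * I₂) := by
        intro k
        have h0 : (∫ t : ℝ, F k t)
            = (∫ t : ℝ, M k t) + ((∫ t : ℝ, F k t) - ∫ t : ℝ, M k t) := by ring
        calc ‖∫ t : ℝ, F k t‖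
            ≤ ‖∫ t : ℝ, M k t‖
              + ‖(∫ t : ℝ, F k t) - ∫ t : ℝ, M k t‖ := by
              conv_lhs => rw [h0]
              exact norm_add_le _ _
          _ ≤ τ₀ * A k b + (ε₁ * |a| * σ * I₁ + A k b * (π * ε₂ * a ^ 2) * σ ^ 2 * I₂) :=
              add_le_add (hmain k) (hrem k)
      have step3 : (∑ k, ‖∫ t : ℝ, F k t‖)
          ≤ ∑ k : Fin K, (τ₀ * A k b
            + (ε₁ * |a| * σ * I₁ + A k b * (π * ε₂ * a ^ 2) * σ ^ 2 * I₂)) :=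
        Finset.sum_le_sum fun k _ => step2 k
      have step4 : (∑ k : Fin K, (τ₀ * A k b
            + (ε₁ * |a| * σ * I₁ + A k b * (π * ε₂ * a ^ 2) * σ ^ 2 * I₂)))
          = τ₀ * SA + K * (ε₁ * |a| * σ * I₁) + π * ε₂ * a ^ 2 * σ ^ 2 * I₂ * SA := by
        rw [Finset.sum_add_distrib, Finset.sum_add_distrib, ← Finset.mul_sum, ← hSAdef,
          Finset.sum_const, Finset.card_univ, Fintype.card_fin, nsmul_eq_mul]
        have e3 : (∑ k : Fin K, A k b * (π * ε₂ * a ^ 2) * σ ^ 2 * I₂)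
            = π * ε₂ * a ^ 2 * σ ^ 2 * I₂ * SA := by
          rw [hSAdef, Finset.mul_sum]
          exact Finset.sum_congr rfl fun k _ => by ring
        rw [e3]
        ring
      linarith [le_trans step1 step3, step4.le]
    have hfinal : τ₀ * SA + K * (ε₁ * |a| * σ * I₁) + π * ε₂ * a ^ 2 * σ ^ 2 * I₂ * SA
        ≤ εtilde₁ := by
      have key : (μ * σ + α) / d0 = a₂ * σ := by
        rw [ha₂def]
        field_simp
      rw [key] at hthr
      have ha2sq : a ^ 2 ≤ a₂ ^ 2 := by
        rw [← sq_abs a]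
        exact pow_le_pow_left₀ (abs_nonneg a) haa₂ 2
      have t1 : K * (ε₁ * |a| * σ * I₁) ≤ a₂ * σ * (K * ε₁ * I₁) := by
        calc (K : ℝ) * (ε₁ * |a| * σ * I₁) = ((K : ℝ) * ε₁ * σ * I₁) * |a| := by ring
          _ ≤ ((K : ℝ) * ε₁ * σ * I₁) * a₂ := by
              apply mul_le_mul_of_nonneg_left haa₂ (by positivity)
          _ = a₂ * σ * ((K : ℝ) * ε₁ * I₁) := by ring
      have t2 : π * ε₂ * a ^ 2 * σ ^ 2 * I₂ * SA
          ≤ a₂ * σ * (π * ε₂ * I₂ * (a₂ * σ) * SA) := by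
        calc π * ε₂ * a ^ 2 * σ ^ 2 * I₂ * SA = (π * ε₂ * σ ^ 2 * I₂ * SA) * a ^ 2 := by ring
          _ ≤ (π * ε₂ * σ ^ 2 * I₂ * SA) * a₂ ^ 2 := by
              apply mul_le_mul_of_nonneg_left ha2sq (by positivity)
          _ = a₂ * σ * (π * ε₂ * I₂ * (a₂ * σ) * SA) := by ring
      have expand : a₂ * σ * ((K : ℝ) * ε₁ * I₁ + π * ε₂ * I₂ * (a₂ * σ) * SA) + τ₀ * SA
          = a₂ * σ * ((K : ℝ) * ε₁ * I₁) + a₂ * σ * (π * ε₂ * I₂ * (a₂ * σ) * SA)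
            + τ₀ * SA := by ring
      rw [expand] at hthr
      linarith
    linarith [hW', hbound, hfinal]
  obtain ⟨k, hk⟩ := hex
  refine ⟨k, hk, fun l hl => ?_⟩
  by_contra hne
  exact Set.disjoint_left.mp (hdisj hne) hl hk
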